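/- Let R be a connected chordal graph containing no induced subgraph isomorphic to a 3-fan. Then every metric triangle u,v,w in R satisfies d(u,v) = d(v,w) = d(w,u) ≤ 1; that is, either u=v=w or u,v,w are pairwise adjacent. -/

import Mathlib

open SimpleGraph

namespace PaperDefs

universe u w

variable {V : Type u} {W : Type w}

/-- The cycle graph of length `n`, on vertex set `ZMod n`. -/
def cycleG (n : ℕ) : SimpleGraph (ZMod n) where
  Adj i j := i ≠ j ∧ (i - j = 1 ∨ j - i = 1)
  symm := by
    constructor
    intro i j h
    exact ⟨h.1.symm, h.2.symm⟩
  loopless := by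
    constructor
    intro i h
    exact h.1 rfl

/-- The 3-fan: a path `0-1-2-3` together with the vertex `4` adjacent to all of `0,1,2,3`. -/
def fan3 : SimpleGraph (Fin 5) :=
  SimpleGraph.fromRel (fun i j =>
    (i = 0 ∧ j = 1) ∨ (i = 1 ∧ j = 2) ∨ (i = 2 ∧ j = 3) ∨ i = 4)

/-- A graph is bridged if it is connected and every isometric cycle has length 3. -/
def IsBridged (G : SimpleGraph V) : Prop :=
  G.Connected ∧
    ∀ (n : ℕ) (f : ZMod n → V), 3 ≤ n → Function.Injective f →
      (∀ i j, (cycleG n).Adj i j → G.Adj (f i) (f j)) →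
      (∀ i j, G.dist (f i) (f j) = (cycleG n).dist i j) → n = 3

/-- The metric interval between `u` and `v`. -/
def interval (G : SimpleGraph V) (u v : V) : Set V :=
  {x | G.dist u x + G.dist x v = G.dist u v}

/-- The `k`-th level set of the interval `I(u,v)`. -/
def level (G : SimpleGraph V) (u v : V) (k : ℕ) : Set V :=
  {x | x ∈ interval G u v ∧ G.dist u x = k}

/-- A set of vertices is convex if it contains the interval between any two of its points. -/
def ConvexSet (G : SimpleGraph V) (A : Set V) : Prop :=
  ∀ x ∈ A, ∀ y ∈ A, interval G x y ⊆ A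

/-- A graph is chordal if it has no induced cycle of length greater than 3. -/
def Chordal (G : SimpleGraph V) : Prop :=
  ∀ n : ℕ, 3 < n → IsEmpty ((cycleG n) ↪g G)

/-- The `n`-tripod: a centre (`none`) with three arms, each a path of length `n`. -/
def tripodG (n : ℕ) : SimpleGraph (Option (Fin 3 × Fin n)) :=
  SimpleGraph.fromRel (fun a b =>
    match a, b with
    | none, some (_, j) => (j : ℕ) = 0
    | some (i, j), some (i', j') => i = i' ∧ (j' : ℕ) = (j : ℕ) + 1
    | _, _ => False)

/-- The `n`-asteroid: a triangle (`Sum.inl`) with a path of length `n` attached to each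
triangle vertex. -/
def asteroidG (n : ℕ) : SimpleGraph (Fin 3 ⊕ (Fin 3 × Fin n)) :=
  SimpleGraph.fromRel (fun a b =>
    match a, b with
    | Sum.inl i, Sum.inl i' => i ≠ i'
    | Sum.inl i, Sum.inr (i', j) => i = i' ∧ (j : ℕ) = 0
    | Sum.inr (i, j), Sum.inr (i', j') => i = i' ∧ (j' : ℕ) = (j : ℕ) + 1
    | _, _ => False)

/-- The doubled asteroid: two triangles `a₁a₂a₃`, `b₁b₂b₃` and three pairwise non-adjacent
vertices `c₁,c₂,c₃`, with `cᵢ` adjacent exactly to `aᵢ` and `bᵢ`. -/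
def doubledAsteroidG : SimpleGraph (Fin 3 ⊕ (Fin 3 ⊕ Fin 3)) :=
  SimpleGraph.fromRel (fun a b =>
    match a, b with
    | Sum.inl i, Sum.inl j => i ≠ j
    | Sum.inr (Sum.inl i), Sum.inr (Sum.inl j) => i ≠ j
    | Sum.inl i, Sum.inr (Sum.inr j) => i = j
    | Sum.inr (Sum.inl i), Sum.inr (Sum.inr j) => i = j
    | _, _ => False)

/-- `f` realizes `H` as an isometrically embedded subgraph of `G`. -/
def IsomEmbedded (H : SimpleGraph W) (G : SimpleGraph V) (f : W → V) : Prop :=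
  Function.Injective f ∧ (∀ a b, H.Adj a b → G.Adj (f a) (f b)) ∧
    ∀ a b, G.dist (f a) (f b) = H.dist a b

/-- A graph is `N`-branchless if it contains no isometrically embedded `n`-tripod and no
isometrically embedded `n`-asteroid with `n > N`. -/
def Branchless (G : SimpleGraph V) (N : ℕ) : Prop :=
  ∀ n : ℕ, N < n →
    (∀ f : Option (Fin 3 × Fin n) → V, ¬ IsomEmbedded (tripodG n) G f) ∧
    (∀ f : Fin 3 ⊕ (Fin 3 × Fin n) → V, ¬ IsomEmbedded (asteroidG n) G f)

/-- The graph `G` (with its path metric) is `(B,C)`-quasi-isometric to a segment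
`{0, 1, …, L}` with the standard metric. -/
def SegmentQI {α : Type*} (G : SimpleGraph α) (B C : ℝ) : Prop :=
  ∃ (L : ℕ) (f : α → Fin (L + 1)),
    (∀ x y : α, B⁻¹ * (G.dist x y : ℝ) - C ≤ |((f x : ℕ) : ℝ) - ((f y : ℕ) : ℝ)|) ∧
    (∀ x y : α, |((f x : ℕ) : ℝ) - ((f y : ℕ) : ℝ)| ≤ B * (G.dist x y : ℝ) + C) ∧
    ∀ i : Fin (L + 1), ∃ x : α, |((f x : ℕ) : ℝ) - ((i : ℕ) : ℝ)| ≤ C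

/-- A bridged graph is fit if there are constants `B, C > 0` such that every level set of
every interval is `(B,C)`-quasi-isometric to a segment. -/
def IsFit (G : SimpleGraph V) : Prop :=
  ∃ B C : ℝ, 0 < B ∧ 0 < C ∧
    ∀ (u v : V) (k : ℕ), k ≤ G.dist u v → SegmentQI (G.induce (level G u v k)) B C

/-- A graph is uniformly locally finite if its vertex degrees are uniformly bounded. -/
def UniformlyLocallyFinite (G : SimpleGraph V) : Prop :=
  ∃ D : ℕ, ∀ v : V, (G.neighborSet v).Finite ∧ (G.neighborSet v).ncard ≤ D

/-- Yu's Property A for the vertex set of a graph with its path metric. -/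
def HasPropertyA (G : SimpleGraph V) : Prop :=
  ∀ ε R : ℝ, 0 < ε → 0 < R →
    ∃ S : ℝ, 0 < S ∧ ∃ A : V → Set (V × ℕ),
      (∀ x : V, (A x).Finite ∧ (A x).Nonempty) ∧
      (∀ x y : V, (G.dist x y : ℝ) ≤ R →
        ((symmDiff (A x) (A y)).ncard : ℝ) ≤ ε * ((A x ∩ A y).ncard : ℝ)) ∧
      ∀ x : V, ∀ p ∈ A x, (G.dist x p.1 : ℝ) ≤ S

end PaperDefs

namespace PaperDefs

variable {V₀ : Type*}

def MetricTriangle (G : SimpleGraph V₀) (u v w : V₀) : Prop :=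
  interval G u v ∩ interval G v w = {v} ∧
  interval G v w ∩ interval G w u = {w} ∧
  interval G w u ∩ interval G u v = {u}

def ballStar (G : SimpleGraph V₀) (K : Set V₀) : Set V₀ :=
  {x | ∀ s ∈ K, G.dist x s ≤ 1}

def ncp (G : SimpleGraph V₀) (u v : V₀) : ℕ → Set V₀
  | 0 => {v}
  | j + 1 => ballStar G (ncp G u v j) ∩ {x | G.dist u x ≤ G.dist u v - (j + 1)}

def altWord {α : Type*} (a b : α) : ℕ → FreeGroup α
  | 0 => 1
  | n + 1 => FreeGroup.of a * altWord b a n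

def artinRels {α : Type*} (Γ : SimpleGraph α) (m : α → α → ℕ) : Set (FreeGroup α) :=
  {w | ∃ a b, Γ.Adj a b ∧ w = altWord a b (m a b) * (altWord b a (m a b))⁻¹}

def cayleyGraph (H : Type*) [Group H] (S : Set H) : SimpleGraph H where
  Adj g h := g ≠ h ∧ (g⁻¹ * h ∈ S ∨ h⁻¹ * g ∈ S)
  symm := by
    constructor
    intro g h hgh
    exact ⟨hgh.1.symm, hgh.2.symm⟩
  loopless := by
    constructor
    intro g hg
    exact hg.1 rfl

end PaperDefs

namespace PaperDefs

open List

universe u3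

variable {V : Type u3}


variable {G : SimpleGraph V}

lemma dist_adj {x y : V} (h : G.Adj x y) : G.dist x y = 1 :=
  dist_eq_one_iff_adj.mpr h

lemma exists_toward (hconn : G.Connected) {x y : V} {n : ℕ} (h : G.dist x y = n + 1) :
    ∃ z, G.Adj x z ∧ G.dist z y = n := by
  obtain ⟨p, hp⟩ := hconn.exists_walk_length_eq_dist x y
  cases p with
  | nil => rw [h] at hp; simp at hp
  | @cons _ z _ ha q =>
    refine ⟨z, ha, le_antisymm ?_ ?_⟩
    · have h1 : G.dist z y ≤ q.length := dist_le q
      have h2 : q.length + 1 = n + 1 := by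
        rw [← h, ← hp]; simp [Nat.add_comm]
      omega
    · have h3 := hconn.dist_triangle (u := x) (v := z) (w := y)
      have h4 : G.dist x z = 1 := dist_adj ha
      omega

lemma chordal_no_hole (hch : Chordal G) (l : List V) (hlen : 4 ≤ l.length)
    (hnd : l.Nodup)
    (hcyc : ∀ i : ℕ, (hi : i < l.length) → (hj : (i + 1) % l.length < l.length) →
      G.Adj (l[i]'hi) (l[(i + 1) % l.length]'hj))
    (hnon : ∀ i j : ℕ, (hi : i < l.length) → (hj : j < l.length) → i ≠ j →
      j ≠ (i + 1) % l.length → i ≠ (j + 1) % l.length → ¬ G.Adj (l[i]'hi) (l[j]'hj)) :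
    False := by
  set n := l.length with hn
  have hnz : NeZero n := ⟨by omega⟩
  have hne1 : n ≠ 1 := by omega
  have hpos : 0 < n := by omega
  have hval : ∀ i : ZMod n, (i + 1).val = (i.val + 1) % n := by
    intro i
    rw [ZMod.val_add, ZMod.val_one'' hne1]
  have hsucc : ∀ i j : ZMod n, j = i + 1 ↔ j.val = (i.val + 1) % n := by
    intro i j
    constructor
    · rintro rfl; exact hval i
    · intro h
      apply ZMod.val_injective
      rw [h, hval]
  obtain ⟨d, hd⟩ : ∃ d, d ∈ l := ⟨l.head (by simp [← List.length_pos_iff_ne_nil]; omega),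
    List.head_mem _⟩
  set g : ℕ → V := fun a => l.getD (a % n) d with hg
  have hgmod : ∀ a b : ℕ, a % n = b % n → g a = g b := by
    intro a b h; simp only [hg, h]
  have hgeq : ∀ (a : ℕ) (ha : a < n), g a = l[a]'ha := by
    intro a ha
    simp only [hg, Nat.mod_eq_of_lt ha]
    exact List.getD_eq_getElem l d ha
  have hadj1 : ∀ a : ℕ, a < n → G.Adj (g a) (g (a + 1)) := by
    intro a ha
    have h1 : g (a + 1) = g ((a + 1) % n) := hgmod _ _ (by rw [Nat.mod_mod_of_dvd _ dvd_rfl])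
    rw [hgeq a ha, h1, hgeq _ (Nat.mod_lt _ hpos)]
    exact hcyc a ha _
  have hnon' : ∀ a b : ℕ, a < n → b < n → a ≠ b → b ≠ (a + 1) % n → a ≠ (b + 1) % n →
      ¬ G.Adj (g a) (g b) := by
    intro a b ha hb h1 h2 h3
    rw [hgeq a ha, hgeq b hb]
    exact hnon a b ha hb h1 h2 h3
  set f : ZMod n → V := fun i => g i.val with hf
  have finj : Function.Injective f := by
    intro i j hij
    simp only [hf, hgeq _ (ZMod.val_lt i), hgeq _ (ZMod.val_lt j)] at hij
    have h2 : (⟨i.val, ZMod.val_lt i⟩ : Fin n) = ⟨j.val, ZMod.val_lt j⟩ :=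
      List.nodup_iff_injective_get.mp hnd (by simpa [List.get_eq_getElem] using hij)
    exact ZMod.val_injective n (by simpa using congrArg Fin.val h2)
  have hiff : ∀ i j : ZMod n, G.Adj (f i) (f j) ↔ (cycleG n).Adj i j := by
    intro i j
    constructor
    · intro hadj
      rcases eq_or_ne i j with rfl | hij
      · exact absurd hadj (G.loopless.irrefl _)
      refine ⟨hij, ?_⟩
      by_contra hc
      push_neg at hc
      obtain ⟨h1, h2⟩ := hc
      have e1 : i ≠ j + 1 := fun h => h1 (by rw [h]; ring)
      have e2 : j ≠ i + 1 := fun h => h2 (by rw [h]; ring)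
      refine hnon' i.val j.val (ZMod.val_lt i) (ZMod.val_lt j) ?_ ?_ ?_ hadj
      · exact fun h => hij (ZMod.val_injective n h)
      · exact fun h => e2 ((hsucc i j).mpr h)
      · exact fun h => e1 ((hsucc j i).mpr h)
    · intro hadj
      have h' : i ≠ j ∧ (i - j = 1 ∨ j - i = 1) := hadj
      obtain ⟨hij, h1 | h1⟩ := h'
      · have hv : i.val = (j.val + 1) % n := (hsucc j i).mp (by rw [← h1]; ring)
        have h2 := hadj1 j.val (ZMod.val_lt j)
        have h3 : g (j.val + 1) = g i.val :=
          hgmod _ _ (by rw [Nat.mod_eq_of_lt (ZMod.val_lt i)]; exact hv.symm)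
        rw [h3] at h2
        exact h2.symm
      · have hv : j.val = (i.val + 1) % n := (hsucc i j).mp (by rw [← h1]; ring)
        have h2 := hadj1 i.val (ZMod.val_lt i)
        have h3 : g (i.val + 1) = g j.val :=
          hgmod _ _ (by rw [Nat.mod_eq_of_lt (ZMod.val_lt j)]; exact hv.symm)
        rw [h3] at h2
        exact h2
  exact (hch n (by omega)).false ⟨⟨f, finj⟩, @fun i j => hiff i j⟩


lemma getElem_congr' (l : List V) {a b : ℕ} (h : a = b) {ha : a < l.length} :
    l[a]'ha = l[b]'(h ▸ ha) := by subst h; rfl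

lemma splice_len (l : List V) (i j : ℕ) (hij : i + 1 < j) (hj : j < l.length) :
    (l.take (i+1) ++ l.drop j).length = i + 1 + (l.length - j) := by
  simp [List.length_take]; omega

lemma splice_sublist (l : List V) (i j : ℕ) (hij : i + 1 ≤ j) :
    (l.take (i+1) ++ l.drop j) <+ l := by
  have h1 : l.drop j = List.drop (j - (i+1)) (l.drop (i+1)) := by
    rw [List.drop_drop]; congr 1; omega
  have h2 : l.take (i+1) ++ l.drop j <+ l.take (i+1) ++ l.drop (i+1) := by
    rw [h1]; exact (List.Sublist.refl _).append (List.drop_sublist _ _)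
  rw [List.take_append_drop (i+1) l] at h2
  exact h2

lemma take_len (l : List V) (i j : ℕ) (hij : i + 1 < j) (hj : j < l.length) :
    (l.take (i+1)).length = i + 1 := by simp; omega

lemma splice_get_low (l : List V) (i j k : ℕ) (hij : i + 1 < j) (hj : j < l.length)
    (hk : k ≤ i) :
    (l.take (i+1) ++ l.drop j)[k]'(by rw [splice_len l i j hij hj]; omega) =
      l[k]'(by omega) := by
  rw [List.getElem_append_left (by rw [take_len l i j hij hj]; omega)]
  exact List.getElem_take

lemma splice_get_high (l : List V) (i j k : ℕ) (hij : i + 1 < j) (hj : j < l.length)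
    (hk : i + 1 ≤ k) (hk2 : k < i + 1 + (l.length - j)) :
    (l.take (i+1) ++ l.drop j)[k]'(by rw [splice_len l i j hij hj]; omega) =
      l[j + (k - (i+1))]'(by omega) := by
  rw [List.getElem_append_right (by rw [take_len l i j hij hj]; omega)]
  have e : (l.take (i+1)).length = i + 1 := take_len l i j hij hj
  simp only [e]
  exact List.getElem_drop

lemma splice_chain (l : List V) (i j : ℕ) (hij : i + 1 < j) (hj : j < l.length)
    (hchain : l.Chain' G.Adj) (hadj : G.Adj (l[i]'(by omega)) (l[j]'hj)) :
    (l.take (i+1) ++ l.drop j).Chain' G.Adj := by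
  have hc := List.isChain_iff_getElem.mp hchain
  refine List.isChain_iff_getElem.mpr ?_
  intro k hk
  rw [splice_len l i j hij hj] at hk
  rcases lt_trichotomy k i with h1 | h1 | h1
  · rw [splice_get_low l i j k hij hj (by omega), splice_get_low l i j (k+1) hij hj (by omega)]
    have := hc k (by omega)
    simpa using this
  · rw [splice_get_low l i j k hij hj (by omega),
      splice_get_high l i j (k+1) hij hj (by omega) (by omega),
      getElem_congr' l (show k = i by omega),
      getElem_congr' l (show j + (k + 1 - (i+1)) = j by omega)]
    exact hadj
  · rw [splice_get_high l i j k hij hj (by omega) (by omega),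
      splice_get_high l i j (k+1) hij hj (by omega) (by omega),
      getElem_congr' l (show j + (k + 1 - (i+1)) = j + (k - (i+1)) + 1 by omega)]
    have := hc (j + (k - (i+1))) (by omega)
    simpa using this

lemma tri (hch : Chordal G) :
    ∀ N : ℕ, ∀ l : List V, l.length = N → 3 ≤ l.length → l.Chain' G.Adj → l.Nodup →
    ∀ v w, l.head? = some v → l.getLast? = some w → G.Adj v w →
    ∃ x ∈ l, x ≠ v ∧ x ≠ w ∧ G.Adj x v ∧ G.Adj x w := by
  intro N
  induction N using Nat.strong_induction_on with
  | _ N IH =>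
  intro l hN hlen hchain hnd v w hv hw hvw
  have h0 : l[0]'(by omega) = v := by
    rw [List.head?_eq_getElem?, List.getElem?_eq_getElem (by omega)] at hv
    exact Option.some_injective _ hv
  have hl : l[l.length - 1]'(by omega) = w := by
    rw [List.getLast?_eq_getElem?, List.getElem?_eq_getElem (by omega)] at hw
    exact Option.some_injective _ hw
  by_cases hchord : ∃ i, ∃ j, ∃ (hi : i < l.length) (hj : j < l.length),
      i + 1 < j ∧ ¬(i = 0 ∧ j = l.length - 1) ∧ G.Adj (l[i]'hi) (l[j]'hj)
  · obtain ⟨i, j, hi, hj, hij, hnotend, hadj⟩ := hchord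
    set l' := l.take (i+1) ++ l.drop j with hldef
    have hlen' : l'.length = i + 1 + (l.length - j) := splice_len l i j hij hj
    have hchain' : l'.Chain' G.Adj := splice_chain l i j hij hj hchain hadj
    have hsub : l' <+ l := splice_sublist l i j (by omega)
    have hnd' : l'.Nodup := hsub.nodup hnd
    have hlen3 : 3 ≤ l'.length := by
      rw [hlen']
      by_cases hi0 : i = 0
      · have : j ≠ l.length - 1 := fun h => hnotend ⟨hi0, h⟩
        omega
      · omega
    have hv' : l'.head? = some v := by
      rw [List.head?_eq_getElem?, List.getElem?_eq_getElem (by omega)]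
      rw [splice_get_low l i j 0 hij hj (by omega), h0]
    have hw' : l'.getLast? = some w := by
      rw [List.getLast?_eq_getElem?, List.getElem?_eq_getElem (by omega)]
      rw [splice_get_high l i j (l'.length - 1) hij hj (by omega) (by omega),
        getElem_congr' l (show j + (l'.length - 1 - (i+1)) = l.length - 1 by omega), hl]
    obtain ⟨x, hx, hxv, hxw, hav, haw⟩ :=
      IH l'.length (by omega) l' rfl hlen3 hchain' hnd' v w hv' hw' hvw
    exact ⟨x, hsub.subset hx, hxv, hxw, hav, haw⟩
  · by_cases h3 : l.length = 3
    · refine ⟨l[1]'(by omega), List.getElem_mem _, ?_, ?_, ?_, ?_⟩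
      · rw [← h0]; intro he
        have := hnd.getElem_inj_iff.mp he; omega
      · rw [← hl]; intro he
        have := hnd.getElem_inj_iff.mp he; omega
      · have c01 := List.isChain_iff_getElem.mp hchain 0 (by omega)
        rw [← h0]; exact c01.symm
      · have c12 := List.isChain_iff_getElem.mp hchain 1 (by omega)
        rw [← hl, getElem_congr' l (show l.length - 1 = 1 + 1 by omega)]
        exact c12
    · exfalso
      push_neg at hchord
      apply chordal_no_hole hch l (by omega) hnd
      · intro i hi hj2
        by_cases hend : i = l.length - 1
        · have e1 : (i+1) % l.length = 0 := by
            rw [show i + 1 = l.length by omega, Nat.mod_self]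
          rw [getElem_congr' l e1, getElem_congr' l hend, hl, h0]
          exact hvw.symm
        · have e1 : (i+1) % l.length = i+1 := Nat.mod_eq_of_lt (by omega)
          rw [getElem_congr' l e1]
          have := List.isChain_iff_getElem.mp hchain i (by omega)
          simpa using this
      · intro i j hi hj hne hc1 hc2 hadj
        rcases lt_trichotomy i j with hlt | he | hlt
        · have hj1 : j ≠ i + 1 := by
            intro h; apply hc1; rw [h, Nat.mod_eq_of_lt (by omega)]
          have hne2 : i = 0 → j ≠ l.length - 1 := by
            intro h1 h2; apply hc2
            rw [h2, show l.length - 1 + 1 = l.length by omega, Nat.mod_self, h1]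
          exact hchord i j hi hj (by omega) hne2 hadj
        · exact hne he
        · have hj1 : i ≠ j + 1 := by
            intro h; apply hc2; rw [h, Nat.mod_eq_of_lt (by omega)]
          have hne2 : j = 0 → i ≠ l.length - 1 := by
            intro h1 h2; apply hc1
            rw [h2, show l.length - 1 + 1 = l.length by omega, Nat.mod_self, h1]
          exact hchord j i hj hi (by omega) hne2 hadj.symm

lemma core (hch : Chordal G) :
    ∀ N : ℕ, ∀ l : List V, l.length = N → 2 ≤ l.length → l.Chain' G.Adj → l.Nodup →
    ∀ z v w, l.head? = some v → l.getLast? = some w → z ∉ l → G.Adj z v → G.Adj z w →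
    (∀ x ∈ l, x ≠ v → x ≠ w → ¬ G.Adj z x) → G.Adj v w := by
  intro N
  induction N using Nat.strong_induction_on with
  | _ N IH =>
  intro l hN hlen hchain hnd z v w hv hw hzl hzv hzw hznon
  have h0 : l[0]'(by omega) = v := by
    rw [List.head?_eq_getElem?, List.getElem?_eq_getElem (by omega)] at hv
    exact Option.some_injective _ hv
  have hl : l[l.length - 1]'(by omega) = w := by
    rw [List.getLast?_eq_getElem?, List.getElem?_eq_getElem (by omega)] at hw
    exact Option.some_injective _ hw
  by_cases h2 : l.length = 2
  · have c01 := List.isChain_iff_getElem.mp hchain 0 (by omega)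
    rw [← h0, ← hl, getElem_congr' l (show l.length - 1 = 0 + 1 by omega)]
    exact c01
  by_cases hadjvw : G.Adj v w
  · exact hadjvw
  by_cases hchord : ∃ i, ∃ j, ∃ (hi : i < l.length) (hj : j < l.length),
      i + 1 < j ∧ ¬(i = 0 ∧ j = l.length - 1) ∧ G.Adj (l[i]'hi) (l[j]'hj)
  · obtain ⟨i, j, hi, hj, hij, hnotend, hadj⟩ := hchord
    set l' := l.take (i+1) ++ l.drop j with hldef
    have hlen' : l'.length = i + 1 + (l.length - j) := splice_len l i j hij hj
    have hchain' : l'.Chain' G.Adj := splice_chain l i j hij hj hchain hadj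
    have hsub : l' <+ l := splice_sublist l i j (by omega)
    have hnd' : l'.Nodup := hsub.nodup hnd
    have hlen2 : 2 ≤ l'.length := by rw [hlen']; omega
    have hv' : l'.head? = some v := by
      rw [List.head?_eq_getElem?, List.getElem?_eq_getElem (by omega)]
      rw [splice_get_low l i j 0 hij hj (by omega), h0]
    have hw' : l'.getLast? = some w := by
      rw [List.getLast?_eq_getElem?, List.getElem?_eq_getElem (by omega)]
      rw [splice_get_high l i j (l'.length - 1) hij hj (by omega) (by omega),
        getElem_congr' l (show j + (l'.length - 1 - (i+1)) = l.length - 1 by omega), hl]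
    exact IH l'.length (by omega) l' rfl hlen2 hchain' hnd' z v w hv' hw'
      (fun h => hzl (hsub.subset h)) hzv hzw
      (fun x hx => hznon x (hsub.subset hx))
  · exfalso
    push_neg at hchord
    have hgetc : ∀ (k : ℕ) (hk : k < l.length), (z :: l)[k+1]'(by simp; omega) = l[k]'hk := by
      intro k hk; simp
    apply chordal_no_hole hch (z :: l) (by simp; omega) (List.nodup_cons.mpr ⟨hzl, hnd⟩)
    · intro i hi hj2
      simp only [List.length_cons] at hi hj2
      by_cases hend : i = l.length
      · have e1 : (i+1) % (z :: l).length = 0 := by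
          simp only [List.length_cons]
          rw [show i + 1 = l.length + 1 by omega, Nat.mod_self]
        rw [getElem_congr' (z :: l) e1]
        have e2 : i = (l.length - 1) + 1 := by omega
        rw [getElem_congr' (z :: l) e2, hgetc _ (by omega), hl]
        simp only [List.getElem_cons_zero]
        exact hzw.symm
      · have e1 : (i+1) % (z :: l).length = i+1 := by
          simp only [List.length_cons]; exact Nat.mod_eq_of_lt (by omega)
        rw [getElem_congr' (z :: l) e1]
        rcases Nat.eq_zero_or_pos i with rfl | hipos
        · rw [hgetc 0 (by omega)]
          simp only [List.getElem_cons_zero, h0]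
          exact hzv
        · rw [getElem_congr' (z :: l) (show i = (i-1)+1 by omega), hgetc _ (by omega),
            hgetc _ (by omega)]
          have := List.isChain_iff_getElem.mp hchain (i-1) (by omega)
          rw [getElem_congr' l (show i - 1 + 1 = i by omega)] at this
          exact this
    · intro i j hi hj hne hc1 hc2 hadj
      simp only [List.length_cons] at hi hj hc1 hc2
      have key : ∀ a b : ℕ, (ha : a < l.length + 1) → (hb : b < l.length + 1) → a < b →
          b ≠ a + 1 → (a = 0 → b ≠ l.length) →
          ¬ G.Adj ((z :: l)[a]'(by simp; omega)) ((z :: l)[b]'(by simp; omega)) := by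
        intro a b ha hb hab hb1 hb2
        rcases Nat.eq_zero_or_pos a with rfl | hapos
        · -- z vs l[b-1], with 2 ≤ b ≤ l.length - 1... b ≤ l.length, b ≠ l.length
          have hb3 : b ≠ l.length := hb2 rfl
          rw [getElem_congr' (z :: l) (show b = (b-1)+1 by omega), hgetc _ (by omega)]
          simp only [List.getElem_cons_zero]
          apply hznon _ (List.getElem_mem _)
          · rw [← h0]; intro he
            have := hnd.getElem_inj_iff.mp he; omega
          · rw [← hl]; intro he
            have := hnd.getElem_inj_iff.mp he; omega
        · rw [getElem_congr' (z :: l) (show a = (a-1)+1 by omega), hgetc _ (by omega),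
            getElem_congr' (z :: l) (show b = (b-1)+1 by omega), hgetc _ (by omega)]
          by_cases hvw : a - 1 = 0 ∧ b - 1 = l.length - 1
          · rw [getElem_congr' l hvw.1, getElem_congr' l hvw.2, h0, hl]
            exact hadjvw
          · exact hchord (a-1) (b-1) (by omega) (by omega) (by omega)
              (by intro u1 u2; exact hvw ⟨u1, u2⟩) 
      rcases lt_trichotomy i j with hlt | he | hlt
      · refine key i j (by omega) (by omega) hlt ?_ ?_ hadj
        · intro h; apply hc1; rw [h]
          exact (Nat.mod_eq_of_lt (by omega)).symm
        · intro h1 h2; apply hc2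
          rw [h2, h1, Nat.mod_self]
      · exact absurd he hne
      · refine key j i (by omega) (by omega) hlt ?_ ?_ hadj.symm
        · intro h'; apply hc2; rw [h']
          exact (Nat.mod_eq_of_lt (by omega)).symm
        · intro h1 h2; apply hc1
          rw [h2, h1, Nat.mod_self]

lemma geo_support (hconn : G.Connected) {a b x : V} (p : G.Walk a b)
    (hp : p.length = G.dist a b) (hx : x ∈ p.support) :
    G.dist a x + G.dist x b = G.dist a b := by
  classical
  have hspec := p.take_spec hx
  have hlen := congrArg Walk.length hspec
  rw [Walk.length_append] at hlen
  have h1 : G.dist a x ≤ (p.takeUntil x hx).length := dist_le _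
  have h2 : G.dist x b ≤ (p.dropUntil x hx).length := dist_le _
  have h3 := hconn.dist_triangle (u := a) (v := x) (w := b)
  omega

lemma levels_path (hconn : G.Connected) {u v w : V} (hvw : v ≠ w) {k : ℕ}
    (hk : 1 ≤ k) (hv : G.dist u v = k) (hw : G.dist u w = k) :
    ∃ l : List V, l.Chain' G.Adj ∧ l.Nodup ∧ 3 ≤ l.length ∧ l.head? = some v ∧
      l.getLast? = some w ∧
      (∀ x ∈ l, x ≠ v → x ≠ w → G.dist u x < k) ∧
      (∀ x ∈ l, G.dist u x ≤ k) := by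
  classical
  obtain ⟨P, hP⟩ := hconn.exists_walk_length_eq_dist v u
  obtain ⟨Q, hQ⟩ := hconn.exists_walk_length_eq_dist u w
  set W := P.append Q with hWdef
  have hPmem : ∀ x ∈ P.support, G.dist v x + G.dist x u = G.dist v u :=
    fun x hx => geo_support hconn P hP hx
  have hQmem : ∀ x ∈ Q.support, G.dist u x + G.dist x w = G.dist u w :=
    fun x hx => geo_support hconn Q hQ hx
  have hvu : G.dist v u = k := by rw [dist_comm]; exact hv
  have hsub : W.bypass.support ⊆ W.support := Walk.support_bypass_subset _
  have hcases : ∀ x ∈ W.bypass.support, x ∈ P.support ∨ x ∈ Q.support :=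
    fun x hx => (Walk.mem_support_append_iff _ _).mp (hsub hx)
  have hle : ∀ x ∈ W.bypass.support, G.dist u x ≤ k := by
    intro x hx
    rcases hcases x hx with h | h
    · have h1 := hPmem x h
      have h2 : G.dist u x = G.dist x u := dist_comm
      omega
    · have h1 := hQmem x h
      omega
  have hlt : ∀ x ∈ W.bypass.support, x ≠ v → x ≠ w → G.dist u x < k := by
    intro x hx hxv hxw
    rcases hcases x hx with h | h
    · have h1 := hPmem x h
      have h2 : 0 < G.dist v x := hconn.pos_dist_of_ne (Ne.symm hxv)
      have h3 : G.dist u x = G.dist x u := dist_comm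
      omega
    · have h1 := hQmem x h
      have h2 : 0 < G.dist x w := hconn.pos_dist_of_ne hxw
      omega
  have hhead : W.bypass.support.head? = some v := by
    rw [W.bypass.support_eq_cons]; rfl
  have hlast : W.bypass.support.getLast? = some w := by
    rw [List.getLast?_eq_getLast_of_ne_nil (Walk.support_ne_nil _), Walk.getLast_support]
  have hlen2 : 3 ≤ W.bypass.support.length := by
    have hlen1 : W.bypass.support.length = W.bypass.length + 1 := Walk.length_support _
    by_contra hcon
    push_neg at hcon
    have hge : 1 ≤ W.bypass.length := by
      rcases Nat.eq_zero_or_pos W.bypass.length with h0 | h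
      · exact absurd (Walk.eq_of_length_eq_zero h0) hvw
      · omega
    have hl1 : W.bypass.length = 1 := by omega
    have hedge : s(v, w) ∈ W.edges := by
      have hsubE := W.edges_bypass_subset
      revert hl1
      generalize hWb : W.bypass = R
      rw [hWb] at hsubE
      cases R with
      | nil => intro h; simp at h
      | @cons _ x _ h q =>
        intro hl1
        simp only [Walk.length_cons, Nat.add_eq_right] at hl1
        have hxw : x = w := Walk.eq_of_length_eq_zero hl1
        subst hxw
        apply hsubE
        simp [Walk.edges_cons]
    rw [hWdef, Walk.edges_append, List.mem_append] at hedge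
    rcases hedge with hE | hE
    · have hmem : w ∈ P.support := P.snd_mem_support_of_mem_edges hE
      have h1 := hPmem w hmem
      have h2 : 0 < G.dist v w := hconn.pos_dist_of_ne hvw
      have h3 : G.dist w u = k := by rw [SimpleGraph.dist_comm]; exact hw
      omega
    · have hmem : v ∈ Q.support := Q.fst_mem_support_of_mem_edges hE
      have h1 := hQmem v hmem
      have h2 : 0 < G.dist v w := hconn.pos_dist_of_ne hvw
      omega
  exact ⟨W.bypass.support, W.bypass.isChain_adj_support, W.bypass_isPath.support_nodup,
    hlen2, hhead, hlast, hlt, hle⟩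

lemma TC (hconn : G.Connected) (hch : Chordal G) {u v w : V} {k : ℕ} (hk : 1 ≤ k)
    (hvw : G.Adj v w) (hv : G.dist u v = k) (hw : G.dist u w = k) :
    ∃ x, G.Adj v x ∧ G.Adj w x ∧ G.dist u x = k - 1 := by
  classical
  obtain ⟨l, hchain, hnd, hlen3, hhead, hlast, hlt, hle⟩ :=
    levels_path hconn hvw.ne hk hv hw
  obtain ⟨x, hxl, hxv, hxw, hav, haw⟩ :=
    tri hch l.length l rfl hlen3 hchain hnd v w hhead hlast hvw
  refine ⟨x, hav.symm, haw.symm, ?_⟩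
  have h1 : G.dist u x < k := hlt x hxl hxv hxw
  have h2 := hconn.dist_triangle (u := u) (v := x) (w := v)
  have h3 : G.dist x v = 1 := dist_adj hav
  omega

lemma QC (hconn : G.Connected) (hch : Chordal G) {u v w z : V} {k : ℕ}
    (hv : G.dist u v = k) (hw : G.dist u w = k) (hz : G.dist u z = k + 1)
    (hzv : G.Adj z v) (hzw : G.Adj z w) : v = w ∨ G.Adj v w := by
  classical
  by_cases hvw : v = w
  · exact Or.inl hvw
  right
  have hk : 1 ≤ k := by
    by_contra hcon
    have hk0 : k = 0 := by omega
    subst hk0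
    apply hvw
    have h1 : u = v := (hconn.dist_eq_zero_iff).mp hv
    have h2 : u = w := (hconn.dist_eq_zero_iff).mp hw
    rw [← h1, ← h2]
  obtain ⟨l, hchain, hnd, hlen3, hhead, hlast, hlt, hle⟩ :=
    levels_path hconn hvw hk hv hw
  have hzl : z ∉ l := by
    intro h
    have := hle z h
    omega
  have hznon : ∀ x ∈ l, x ≠ v → x ≠ w → ¬ G.Adj z x := by
    intro x hx hxv hxw hadj
    have h1 := hlt x hx hxv hxw
    have h2 := hconn.dist_triangle (u := u) (v := x) (w := z)
    have h3 : G.dist x z = 1 := dist_adj hadj.symm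
    omega
  exact core hch l.length l rfl (by omega) hchain hnd z v w hhead hlast hzl hzv hzw hznon

lemma left_mem_interval (u v : V) : u ∈ interval G u v := by
  simp [interval, dist_self]

lemma right_mem_interval (u v : V) : v ∈ interval G u v := by
  simp [interval, dist_self]

lemma eq_of_inter_singleton {A B : Set V} {x t : V} (h : A ∩ B = {x})
    (ht1 : t ∈ A) (ht2 : t ∈ B) : t = x := by
  have : t ∈ ({x} : Set V) := h ▸ Set.mem_inter ht1 ht2
  exact this

lemma exists_other {A : Set V} {x : V} (hx : x ∈ A) (hne : A ≠ {x}) :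
    ∃ t ∈ A, t ≠ x := by
  by_contra h
  push_neg at h
  exact hne (Set.eq_singleton_iff_unique_mem.mpr ⟨hx, h⟩)

lemma qm_step (hconn : G.Connected) {p q r a b c t : V}
    (h1 : G.dist p q = G.dist p a + G.dist a b + G.dist b q)
    (h2 : G.dist q r = G.dist q b + G.dist b c + G.dist c r)
    (ht1 : t ∈ interval G a b) (ht2 : t ∈ interval G b c) (htb : t ≠ b) :
    G.dist p q = G.dist p a + G.dist a t + G.dist t q ∧
    G.dist q r = G.dist q t + G.dist t c + G.dist c r ∧
    G.dist a t + G.dist t c < G.dist a b + G.dist b c := by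
  have e1 : G.dist a t + G.dist t b = G.dist a b := ht1
  have e2 : G.dist b t + G.dist t c = G.dist b c := ht2
  have c1 : G.dist t b = G.dist b t := dist_comm
  have c2 : G.dist t q ≤ G.dist t b + G.dist b q := hconn.dist_triangle
  have c3 : G.dist p t ≤ G.dist p a + G.dist a t := by
    have := hconn.dist_triangle (u := p) (v := a) (w := t); omega
  have c4 : G.dist p q ≤ G.dist p t + G.dist t q := hconn.dist_triangle
  have c5 : G.dist q t ≤ G.dist q b + G.dist b t := hconn.dist_triangle
  have c6 : G.dist t r ≤ G.dist t c + G.dist c r := hconn.dist_triangle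
  have c7 : G.dist q r ≤ G.dist q t + G.dist t r := hconn.dist_triangle
  have hpos : 0 < G.dist t b := hconn.pos_dist_of_ne htb
  have c8 : G.dist p q ≤ G.dist p a + G.dist a t + G.dist t q := by omega
  omega

lemma qm_exists (hconn : G.Connected) (p q r : V) :
    ∃ a b c : V,
      (G.dist p q = G.dist p a + G.dist a b + G.dist b q ∧
       G.dist q r = G.dist q b + G.dist b c + G.dist c r ∧
       G.dist r p = G.dist r c + G.dist c a + G.dist a p) ∧
      MetricTriangle G a b c := by
  classical
  have hex : ∃ n, ∃ a b c : V,
      (G.dist p q = G.dist p a + G.dist a b + G.dist b q ∧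
       G.dist q r = G.dist q b + G.dist b c + G.dist c r ∧
       G.dist r p = G.dist r c + G.dist c a + G.dist a p) ∧
      G.dist a b + G.dist b c + G.dist c a = n := by
    refine ⟨G.dist p q + G.dist q r + G.dist r p, p, q, r, ⟨?_, ?_, ?_⟩, rfl⟩ <;>
      simp [dist_self]
  obtain ⟨a, b, c, ⟨h1, h2, h3⟩, hper⟩ := Nat.find_spec hex
  refine ⟨a, b, c, ⟨h1, h2, h3⟩, ?_, ?_, ?_⟩
  · by_contra hne
    obtain ⟨t, ⟨ht1, ht2⟩, htb⟩ :=
      exists_other (Set.mem_inter (right_mem_interval a b) (left_mem_interval b c)) hne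
    obtain ⟨n1, n2, n3⟩ := qm_step hconn h1 h2 ht1 ht2 htb
    exact Nat.find_min hex (m := G.dist a t + G.dist t c + G.dist c a) (by omega)
      ⟨a, t, c, ⟨n1, n2, h3⟩, rfl⟩
  · by_contra hne
    obtain ⟨t, ⟨ht1, ht2⟩, htc⟩ :=
      exists_other (Set.mem_inter (right_mem_interval b c) (left_mem_interval c a)) hne
    obtain ⟨n1, n2, n3⟩ := qm_step hconn h2 h3 ht1 ht2 htc
    exact Nat.find_min hex (m := G.dist a b + G.dist b t + G.dist t a) (by omega)
      ⟨a, b, t, ⟨h1, n1, n2⟩, rfl⟩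
  · by_contra hne
    obtain ⟨t, ⟨ht1, ht2⟩, hta⟩ :=
      exists_other (Set.mem_inter (right_mem_interval c a) (left_mem_interval a b)) hne
    obtain ⟨n1, n2, n3⟩ := qm_step hconn h3 h1 ht1 ht2 hta
    exact Nat.find_min hex (m := G.dist t b + G.dist b c + G.dist c t) (by omega)
      ⟨t, b, c, ⟨n2, h2, n1⟩, rfl⟩

lemma lemK (hconn : G.Connected) (hch : Chordal G) :
    ∀ a : ℕ, 1 ≤ a → ∀ u v w : V, G.dist v w = a → G.dist u v < G.dist u w →
    ∃ z, G.Adj w z ∧ G.dist u z = G.dist u w - 1 ∧ G.dist z v = a - 1 := by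
  intro a
  induction a using Nat.strong_induction_on with
  | _ a IH =>
  intro ha u v w hvw hlt
  rcases eq_or_lt_of_le ha with ha1 | ha2
  · -- a = 1
    have hv1 : G.dist v w = 1 := by omega
    have hadj : G.Adj v w := dist_eq_one_iff_adj.mp hv1
    refine ⟨v, hadj.symm, ?_, by rw [SimpleGraph.dist_self]; omega⟩
    have t1 : G.dist u w ≤ G.dist u v + G.dist v w := hconn.dist_triangle
    have t2 : G.dist u v ≤ G.dist u w + G.dist w v := hconn.dist_triangle
    have c1 : G.dist w v = 1 := by rw [SimpleGraph.dist_comm]; exact hv1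
    omega
  · -- a ≥ 2
    have hwv : G.dist w v = a := by rw [SimpleGraph.dist_comm]; exact hvw
    obtain ⟨x, hwx, hxv⟩ := exists_toward hconn (show G.dist w v = (a-1)+1 by omega)
    have hxw1 : G.dist w x = 1 := dist_adj hwx
    have t1 : G.dist u x ≤ G.dist u w + G.dist w x := hconn.dist_triangle
    have t2 : G.dist u w ≤ G.dist u x + G.dist x w := hconn.dist_triangle
    have cxw : G.dist x w = G.dist w x := dist_comm
    have hcase : G.dist u x = G.dist u w - 1 ∨ G.dist u x = G.dist u w ∨
        G.dist u x = G.dist u w + 1 := by omega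
    have hvx : G.dist v x = a - 1 := by rw [SimpleGraph.dist_comm]; exact hxv
    rcases hcase with hx1 | hx1 | hx1
    · exact ⟨x, hwx, hx1, hxv⟩
    · obtain ⟨y, hwy, hxy, hyl⟩ := TC hconn hch (u := u) (k := G.dist u w)
        (by omega) hwx rfl hx1
      obtain ⟨z', hxz', hz'l, hz'v⟩ := IH (a-1) (by omega) (by omega) u v x hvx (by omega)
      rw [hx1] at hz'l
      have hyz : y = z' ∨ G.Adj y z' := QC hconn hch (u := u) (k := G.dist u w - 1)
        hyl hz'l (by omega) hxy hxz'
      have hdyz : G.dist y z' ≤ 1 := by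
        rcases hyz with rfl | hadj
        · rw [SimpleGraph.dist_self]; omega
        · rw [dist_adj hadj]
      have t3 : G.dist y v ≤ G.dist y z' + G.dist z' v := hconn.dist_triangle
      have t4 : G.dist v w ≤ G.dist v y + G.dist y w := hconn.dist_triangle
      have c1 : G.dist v y = G.dist y v := SimpleGraph.dist_comm
      have c2 : G.dist y w = G.dist w y := SimpleGraph.dist_comm
      have c3 : G.dist w y = 1 := dist_adj hwy
      exact ⟨y, hwy, hyl, by omega⟩
    · obtain ⟨z', hxz', hz'l, hz'v⟩ := IH (a-1) (by omega) (by omega) u v x hvx (by omega)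
      rw [hx1] at hz'l
      have hyz : w = z' ∨ G.Adj w z' := QC hconn hch (u := u) (k := G.dist u w)
        rfl (by omega) hx1 hwx.symm hxz'
      have hdyz : G.dist w z' ≤ 1 := by
        rcases hyz with rfl | hadj
        · rw [SimpleGraph.dist_self]; omega
        · rw [dist_adj hadj]
      have t3 : G.dist w v ≤ G.dist w z' + G.dist z' v := hconn.dist_triangle
      omega

lemma mt_degenerate {u v w : V} (h : MetricTriangle G u v w)
    (hd : u = v ∨ v = w ∨ u = w) : u = v ∧ v = w := by
  obtain ⟨h1, h2, h3⟩ := h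
  rcases hd with rfl | rfl | rfl
  · have : u = w := eq_of_inter_singleton h2 (left_mem_interval u w) (right_mem_interval w u)
    exact ⟨rfl, this⟩
  · have : v = u := eq_of_inter_singleton h3 (left_mem_interval v u) (right_mem_interval u v)
    exact ⟨this.symm, rfl⟩
  · have : u = v := eq_of_inter_singleton h1 (left_mem_interval u v) (right_mem_interval v u)
    exact ⟨this, this ▸ rfl⟩

lemma mt_equilateral (hconn : G.Connected) (hch : Chordal G) {u v w : V}
    (h : MetricTriangle G u v w) :
    G.dist u v = G.dist v w ∧ G.dist v w = G.dist w u := by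
  by_cases hd : u = v ∨ v = w ∨ u = w
  · obtain ⟨rfl, rfl⟩ := mt_degenerate h hd
    simp [SimpleGraph.dist_self]
  push_neg at hd
  obtain ⟨huv, hvw, huw⟩ := hd
  have puv : 0 < G.dist u v := hconn.pos_dist_of_ne huv
  have pvw : 0 < G.dist v w := hconn.pos_dist_of_ne hvw
  have puw : 0 < G.dist u w := hconn.pos_dist_of_ne huw
  have step1 : G.dist u v = G.dist u w := by
    by_contra hne
    rcases Nat.lt_or_ge (G.dist u v) (G.dist u w) with hlt | hge
    · obtain ⟨z, hwz, hzl, hzv⟩ := lemK hconn hch (G.dist v w) (by omega) u v w rfl hlt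
      have c1 : G.dist w z = 1 := dist_adj hwz
      have c2 : G.dist v z = G.dist z v := SimpleGraph.dist_comm
      have c3 : G.dist z w = G.dist w z := SimpleGraph.dist_comm
      have c4 : G.dist z u = G.dist u z := SimpleGraph.dist_comm
      have c5 : G.dist w u = G.dist u w := SimpleGraph.dist_comm
      have hz1 : z ∈ interval G v w := by
        simp only [interval, Set.mem_setOf_eq]; omega
      have hz2 : z ∈ interval G w u := by
        simp only [interval, Set.mem_setOf_eq]; omega
      exact hwz.ne (eq_of_inter_singleton h.2.1 hz1 hz2).symm
    · have hlt2 : G.dist u w < G.dist u v := by omega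
      have hwv : G.dist w v = G.dist v w := SimpleGraph.dist_comm
      obtain ⟨z, hvz, hzl, hzw⟩ := lemK hconn hch (G.dist w v) (by omega) u w v rfl hlt2
      have c1 : G.dist v z = 1 := dist_adj hvz
      have c2 : G.dist z v = G.dist v z := SimpleGraph.dist_comm
      have hz1 : z ∈ interval G u v := by
        simp only [interval, Set.mem_setOf_eq]; omega
      have hz2 : z ∈ interval G v w := by
        simp only [interval, Set.mem_setOf_eq]; omega
      exact hvz.ne (eq_of_inter_singleton h.1 hz1 hz2).symm
  have step2 : G.dist v u = G.dist v w := by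
    by_contra hne
    rcases Nat.lt_or_ge (G.dist v u) (G.dist v w) with hlt | hge
    · obtain ⟨z, hwz, hzl, hzu⟩ := lemK hconn hch (G.dist u w) (by omega) v u w rfl hlt
      have c1 : G.dist w z = 1 := dist_adj hwz
      have c2 : G.dist z w = G.dist w z := SimpleGraph.dist_comm
      have c3 : G.dist z u = G.dist u z := SimpleGraph.dist_comm
      have c4 : G.dist w u = G.dist u w := SimpleGraph.dist_comm
      have hz1 : z ∈ interval G v w := by
        simp only [interval, Set.mem_setOf_eq]; omega
      have hz2 : z ∈ interval G w u := by
        simp only [interval, Set.mem_setOf_eq]; omega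
      exact hwz.ne (eq_of_inter_singleton h.2.1 hz1 hz2).symm
    · have hlt2 : G.dist v w < G.dist v u := by omega
      have hwu : G.dist w u = G.dist u w := SimpleGraph.dist_comm
      obtain ⟨z, huz, hzl, hzw⟩ := lemK hconn hch (G.dist w u) (by omega) v w u rfl hlt2
      have c1 : G.dist u z = 1 := dist_adj huz
      have c2 : G.dist z u = G.dist u z := SimpleGraph.dist_comm
      have c3 : G.dist z w = G.dist w z := SimpleGraph.dist_comm
      have c4 : G.dist w z = G.dist z w := SimpleGraph.dist_comm
      have c5 : G.dist v u = G.dist u v := SimpleGraph.dist_comm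
      have c6 : G.dist z v = G.dist v z := SimpleGraph.dist_comm
      have hz1 : z ∈ interval G w u := by
        simp only [interval, Set.mem_setOf_eq]; omega
      have hz2 : z ∈ interval G u v := by
        simp only [interval, Set.mem_setOf_eq]
        omega
      exact huz.ne (eq_of_inter_singleton h.2.2 hz1 hz2).symm
  have c7 : G.dist v u = G.dist u v := SimpleGraph.dist_comm
  have c8 : G.dist w u = G.dist u w := SimpleGraph.dist_comm
  omega

lemma not_adj_of_dist_two {x y : V} (h : G.dist x y = 2) : ¬ G.Adj x y := by
  intro hadj
  rw [dist_adj hadj] at h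
  omega

lemma mt_two_fan (hconn : G.Connected) (hch : Chordal G)
    (hfan : IsEmpty (fan3 ↪g G)) {u v w : V} (h : MetricTriangle G u v w)
    (duv : G.dist u v = 2) (dvw : G.dist v w = 2) (duw : G.dist u w = 2) : False := by
  have huv : u ≠ v := by intro e; rw [e, SimpleGraph.dist_self] at duv; omega
  obtain ⟨m, hum, hm1⟩ := exists_toward hconn (show G.dist u v = 1 + 1 from duv)
  have hmv : G.Adj m v := dist_eq_one_iff_adj.mp hm1
  have hum1 : G.dist u m = 1 := dist_adj hum
  have hwv : G.dist w v = 2 := by rw [SimpleGraph.dist_comm]; exact dvw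
  have hwu : G.dist w u = 2 := by rw [SimpleGraph.dist_comm]; exact duw
  have hvu : G.dist v u = 2 := by rw [SimpleGraph.dist_comm]; exact duv
  have hmv1 : G.dist m v = 1 := dist_adj hmv
  have hvm1 : G.dist v m = 1 := by rw [SimpleGraph.dist_comm]; exact hmv1
  have hmu1 : G.dist m u = 1 := by rw [SimpleGraph.dist_comm]; exact hum1
  have hwm : G.dist w m = 2 := by
    have t1 : G.dist w m ≤ G.dist w u + G.dist u m := hconn.dist_triangle
    have t2 : G.dist w v ≤ G.dist w m + G.dist m v := hconn.dist_triangle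
    have hne1 : G.dist w m ≠ 1 := by
      intro h1
      have hz1 : m ∈ interval G w u := by
        simp only [interval, Set.mem_setOf_eq]; omega
      have hz2 : m ∈ interval G u v := by
        simp only [interval, Set.mem_setOf_eq]; omega
      exact hum.ne (eq_of_inter_singleton h.2.2 hz1 hz2).symm
    have hne0 : G.dist w m ≠ 0 := by
      intro h1
      have : w = m := hconn.dist_eq_zero_iff.mp h1
      rw [← this] at hmu1
      omega
    have hne3 : G.dist w m ≠ 3 := by
      intro h1
      rcases QC hconn hch (u := w) (k := 2) hwu hwv h1 hum.symm hmv with he | hadj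
      · exact huv he
      · exact not_adj_of_dist_two duv hadj
    omega
  have hmw2 : G.dist m w = 2 := by rw [SimpleGraph.dist_comm]; exact hwm
  -- t adjacent to v, m with d(w,t)=1
  obtain ⟨t, hvt, hmt, hwt0⟩ := TC hconn hch (u := w) (k := 2) (by omega) hmv.symm hwv hwm
  have hwt : G.dist w t = 1 := by omega
  have hvt1 : G.dist v t = 1 := dist_adj hvt
  have htw1 : G.dist t w = 1 := by rw [SimpleGraph.dist_comm]; exact hwt
  have hmt1 : G.dist m t = 1 := dist_adj hmt
  have hut : G.dist u t = 2 := by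
    have t1 : G.dist u t ≤ G.dist u m + G.dist m t := hconn.dist_triangle
    have hne0 : G.dist u t ≠ 0 := by
      intro h1
      have : u = t := hconn.dist_eq_zero_iff.mp h1
      rw [← this] at hwt
      omega
    have hne1 : G.dist u t ≠ 1 := by
      intro h1
      have c1 : G.dist t u = 1 := by rw [SimpleGraph.dist_comm]; exact h1
      have hz1 : t ∈ interval G v w := by
        simp only [interval, Set.mem_setOf_eq]; omega
      have hz2 : t ∈ interval G w u := by
        simp only [interval, Set.mem_setOf_eq]; omega
      have := eq_of_inter_singleton h.2.1 hz1 hz2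
      rw [this] at hwt
      rw [SimpleGraph.dist_self] at hwt
      omega
    omega
  -- t' adjacent to u, m with d(w,t')=1
  obtain ⟨t', hut', hmt', hwt'0⟩ := TC hconn hch (u := w) (k := 2) (by omega) hum hwu hwm
  have hwt' : G.dist w t' = 1 := by omega
  have hut'1 : G.dist u t' = 1 := dist_adj hut'
  have ht'w1 : G.dist t' w = 1 := by rw [SimpleGraph.dist_comm]; exact hwt'
  have hmt'1 : G.dist m t' = 1 := dist_adj hmt'
  have hvt' : G.dist v t' = 2 := by
    have t1 : G.dist v t' ≤ G.dist v m + G.dist m t' := hconn.dist_triangle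
    have hne0 : G.dist v t' ≠ 0 := by
      intro h1
      have : v = t' := hconn.dist_eq_zero_iff.mp h1
      rw [← this] at hwt'
      omega
    have hne1 : G.dist v t' ≠ 1 := by
      intro h1
      have c1 : G.dist t' u = 1 := by rw [SimpleGraph.dist_comm]; exact hut'1
      have hz1 : t' ∈ interval G v w := by
        simp only [interval, Set.mem_setOf_eq]; omega
      have hz2 : t' ∈ interval G w u := by
        simp only [interval, Set.mem_setOf_eq]; omega
      have := eq_of_inter_singleton h.2.1 hz1 hz2
      rw [this] at hwt'
      rw [SimpleGraph.dist_self] at hwt'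
      omega
    omega
  have htt'ne : t ≠ t' := by
    intro e; rw [← e] at hut'1; omega
  have htt' : G.Adj t t' := by
    rcases QC hconn hch (u := w) (k := 1) hwt hwt' (show G.dist w m = 1 + 1 by rw [hwm]) hmt hmt' with he | hadj
    · exact absurd he htt'ne
    · exact hadj
  -- now build the fan embedding: 0=v 1=t 2=t' 3=u 4=m
  have hnadj_vt' : ¬ G.Adj v t' := not_adj_of_dist_two hvt'
  have hnadj_vu : ¬ G.Adj v u := not_adj_of_dist_two hvu
  have hnadj_tu : ¬ G.Adj t u := not_adj_of_dist_two (by rw [SimpleGraph.dist_comm]; exact hut)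
  have hne_vt : v ≠ t := hvt.ne
  have hne_vt' : v ≠ t' := by intro e; rw [← e, SimpleGraph.dist_self] at hvt'; omega
  have hne_vm : v ≠ m := hmv.ne'
  have hne_tu : t ≠ u := by intro e; rw [← e, SimpleGraph.dist_self] at hut; omega
  have hne_tm : t ≠ m := hmt.ne'
  have hne_t'u : t' ≠ u := hut'.ne'
  have hne_t'm : t' ≠ m := hmt'.ne'
  have hne_um : u ≠ m := hum.ne
  have hne_tv := hne_vt.symm
  have hne_t'v := hne_vt'.symm
  have hne_mv := hne_vm.symm
  have hne_ut := hne_tu.symm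
  have hne_mt := hne_tm.symm
  have hne_ut' := hne_t'u.symm
  have hne_mt' := hne_t'm.symm
  have hne_mu := hne_um.symm
  have hne_t't := htt'ne.symm
  have hne_uv := huv.symm
  set g : Fin 5 → V := ![v, t, t', u, m] with hg
  have hg0 : g 0 = v := rfl
  have hg1 : g 1 = t := rfl
  have hg2 : g 2 = t' := rfl
  have hg3 : g 3 = u := rfl
  have hg4 : g 4 = m := rfl
  have hginj : Function.Injective g := by
    intro a b hab
    fin_cases a <;> fin_cases b <;> simp_all [hg0, hg1, hg2, hg3, hg4]
  have hrel : ∀ a b : Fin 5, G.Adj (g a) (g b) ↔ fan3.Adj a b := by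
    intro a b
    fin_cases a <;> fin_cases b <;>
      simp [hg, fan3, SimpleGraph.fromRel_adj] <;>
      first
        | exact G.loopless _
        | exact hvt | exact hvt.symm | exact htt' | exact htt'.symm
        | exact hut'.symm | exact hut' | exact hmv.symm | exact hmv
        | exact hmt.symm | exact hmt | exact hmt'.symm | exact hmt'
        | exact hum.symm | exact hum
        | exact hnadj_vt' | exact hnadj_vu | exact hnadj_tu
        | exact fun hx => hnadj_vt' hx.symm
        | exact fun hx => hnadj_vu hx.symm
        | exact fun hx => hnadj_tu hx.symm
  exact hfan.false ⟨⟨g, hginj⟩, @fun a b => hrel a b⟩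

lemma qm_z (hconn : G.Connected) (hch : Chordal G) {u v w z : V} {k : ℕ}
    (h : MetricTriangle G u v w) (huv : G.dist u v = k) (hwu : G.dist w u = k)
    (hz : G.dist u z + G.dist z v = k) (hz2 : G.dist u z = 2) :
    k ≤ G.dist w z ∧ (G.dist w z = k →
      ∃ a b c, MetricTriangle G a b c ∧ G.dist a b = 2 ∧ G.dist b c = 2 ∧ G.dist c a = 2) := by
  obtain ⟨a, b, c, ⟨s1, s2, s3⟩, hmt⟩ := qm_exists hconn u z w
  obtain ⟨e1, e2⟩ := mt_equilateral hconn hch hmt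
  -- show a = u
  have tA : G.dist a z ≤ G.dist a b + G.dist b z := hconn.dist_triangle
  have tB : G.dist u z ≤ G.dist u a + G.dist a z := hconn.dist_triangle
  have tC : G.dist a v ≤ G.dist a z + G.dist z v := hconn.dist_triangle
  have tD : G.dist u v ≤ G.dist u a + G.dist a v := hconn.dist_triangle
  have tE : G.dist w a ≤ G.dist w c + G.dist c a := hconn.dist_triangle
  have tF : G.dist w u ≤ G.dist w a + G.dist a u := hconn.dist_triangle
  have cau : G.dist a u = G.dist u a := SimpleGraph.dist_comm
  have hz1 : a ∈ interval G u v := by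
    simp only [interval, Set.mem_setOf_eq]; omega
  have hz2' : a ∈ interval G w u := by
    simp only [interval, Set.mem_setOf_eq]; omega
  have hau : a = u := eq_of_inter_singleton h.2.2 hz2' hz1
  have d0 : G.dist u a = 0 := by rw [hau, SimpleGraph.dist_self]
  have d0' : G.dist a u = 0 := by rw [hau, SimpleGraph.dist_self]
  have cbz : G.dist b z = G.dist z b := SimpleGraph.dist_comm
  have ccw : G.dist c w = G.dist w c := SimpleGraph.dist_comm
  have czw : G.dist z w = G.dist w z := SimpleGraph.dist_comm
  have cca : G.dist c a = G.dist a c := SimpleGraph.dist_comm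
  constructor
  · omega
  · intro hL
    exact ⟨a, b, c, hmt, by omega, by omega, by omega⟩

lemma mt_small (hconn : G.Connected) (hch : Chordal G) (hfan : IsEmpty (fan3 ↪g G))
    {u v w : V} (h : MetricTriangle G u v w) : G.dist u v ≤ 1 := by
  by_contra hbig
  push_neg at hbig
  obtain ⟨e1, e2⟩ := mt_equilateral hconn hch h
  set k := G.dist u v with hk
  have hvwk : G.dist v w = k := by omega
  have hwuk : G.dist w u = k := by omega
  have hwvk : G.dist w v = k := by rw [SimpleGraph.dist_comm]; exact hvwk
  have huwk : G.dist u w = k := by rw [SimpleGraph.dist_comm]; exact hwuk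
  have hsize2 : ∃ a b c, MetricTriangle G a b c ∧
      G.dist a b = 2 ∧ G.dist b c = 2 ∧ G.dist c a = 2 := by
    rcases eq_or_lt_of_le (Nat.succ_le_of_lt hbig) with hk2 | hk3
    · exact ⟨u, v, w, h, by omega, by omega, by omega⟩
    · -- k ≥ 3
      obtain ⟨g1, hug1, hg1v⟩ := exists_toward hconn (show G.dist u v = (k-1) + 1 by omega)
      have hug1d : G.dist u g1 = 1 := dist_adj hug1
      have hg1ud : G.dist g1 u = 1 := by rw [SimpleGraph.dist_comm]; exact hug1d
      have hvg1 : G.dist v g1 = k - 1 := by rw [SimpleGraph.dist_comm]; exact hg1v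
      have tA : G.dist w g1 ≤ G.dist w u + G.dist u g1 := hconn.dist_triangle
      have tB : G.dist w u ≤ G.dist w g1 + G.dist g1 u := hconn.dist_triangle
      have hnotk1 : G.dist w g1 ≠ k - 1 := by
        intro hL
        have hi1 : g1 ∈ interval G w u := by
          simp only [interval, Set.mem_setOf_eq]; omega
        have hi2 : g1 ∈ interval G u v := by
          simp only [interval, Set.mem_setOf_eq]; omega
        exact hug1.ne (eq_of_inter_singleton h.2.2 hi1 hi2).symm
      have hcase : G.dist w g1 = k ∨ G.dist w g1 = k + 1 := by omega
      rcases hcase with hL1 | hL1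
      · -- L1 = k : go to g2
        obtain ⟨g2, hg1g2, hg2v⟩ := exists_toward hconn
          (show G.dist g1 v = (k-2) + 1 by omega)
        have hg1g2d : G.dist g1 g2 = 1 := dist_adj hg1g2
        have tC : G.dist u g2 ≤ G.dist u g1 + G.dist g1 g2 := hconn.dist_triangle
        have tD : G.dist u v ≤ G.dist u g2 + G.dist g2 v := hconn.dist_triangle
        have hug2 : G.dist u g2 = 2 := by omega
        have hzint : G.dist u g2 + G.dist g2 v = k := by omega
        obtain ⟨hge, hgo⟩ := qm_z hconn hch h rfl hwuk hzint hug2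
        have tE : G.dist w g2 ≤ G.dist w g1 + G.dist g1 g2 := hconn.dist_triangle
        have hcase2 : G.dist w g2 = k ∨ G.dist w g2 = k + 1 := by omega
        rcases hcase2 with hL2 | hL2
        · exact hgo hL2
        · exfalso
          have hvg2 : G.dist v g2 = k - 2 := by rw [SimpleGraph.dist_comm]; exact hg2v
          obtain ⟨z', hg2z', hwz', hz'v⟩ := lemK hconn hch (G.dist v g2) (by omega)
            w v g2 rfl (by omega)
          rw [hL2] at hwz'
          have hqc : g1 = z' ∨ G.Adj g1 z' := QC hconn hch (u := w) (k := k)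
            hL1 (by omega) hL2 hg1g2.symm hg2z'
          have hdist : G.dist g1 z' ≤ 1 := by
            rcases hqc with rfl | hadj
            · rw [SimpleGraph.dist_self]; omega
            · rw [dist_adj hadj]
          have tF : G.dist g1 v ≤ G.dist g1 z' + G.dist z' v := hconn.dist_triangle
          omega
      · -- L1 = k+1
        obtain ⟨z, hg1z, hwz, hzv⟩ := lemK hconn hch (G.dist v g1) (by omega)
          w v g1 rfl (by omega)
        rw [hL1] at hwz
        have hg1zd : G.dist g1 z = 1 := dist_adj hg1z
        have tC : G.dist u z ≤ G.dist u g1 + G.dist g1 z := hconn.dist_triangle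
        have tD : G.dist u v ≤ G.dist u z + G.dist z v := hconn.dist_triangle
        have huz : G.dist u z = 2 := by omega
        have hzint : G.dist u z + G.dist z v = k := by omega
        obtain ⟨hge, hgo⟩ := qm_z hconn hch h rfl hwuk hzint huz
        exact hgo (by omega)
  obtain ⟨a, b, c, hmt2, d1, d2, d3⟩ := hsize2
  exact mt_two_fan hconn hch hfan hmt2 d1 d2 (by rw [SimpleGraph.dist_comm]; exact d3)


end PaperDefs

open PaperDefs

theorem statement5 {V : Type*} (G : SimpleGraph V) (hconn : G.Connected)
    (hch : Chordal G) (hfan : IsEmpty (fan3 ↪g G))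
    (u v w : V) (h : MetricTriangle G u v w) :
    G.dist u v = G.dist v w ∧ G.dist v w = G.dist w u ∧ G.dist u v ≤ 1 := by
  obtain ⟨e1, e2⟩ := mt_equilateral hconn hch h
  exact ⟨e1, e2, mt_small hconn hch hfan h⟩
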